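/- Let p ≥ 5 be a prime and set f = φ((p+1)/2), where φ is Euler's totient function. Then the number of integers k with 1 ≤ k ≤ p such that z_k(p) = (p+1)/2 equals f, and the number of integers k with 1 ≤ k ≤ p such that p ∤ k(k+1) and z_k(p) < (p+1)/2 equals p − f − 2. (The value z_k(p) depends only on the residue class of k modulo p, so these counts are counts of residue classes.) -/

import Mathlib

set_option linter.unusedSectionVars false
set_option maxHeartbeats 1000000


/-- The Shallit sequence `U(k)`: `U₀ = 0`, `U₁ = 1`,
`U_{n+2} = (4k+2) U_{n+1} - U_n`. -/
def shallitU (k : ℕ) : ℕ → ℤ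
  | 0 => 0
  | 1 => 1
  | n + 2 => (4 * (k : ℤ) + 2) * shallitU k (n + 1) - shallitU k n

/-- `U₀(k), …, U_{n-1}(k)` are pairwise incongruent modulo `m`. -/
def Discriminates (k m n : ℕ) : Prop :=
  ∀ i j : ℕ, i < n → j < n → shallitU k i ≡ shallitU k j [ZMOD (m : ℤ)] → i = j

/-- The discriminator `D_k(n)`: the smallest positive integer `m` such that
`U₀(k), …, U_{n-1}(k)` are pairwise incongruent modulo `m`. -/
noncomputable def shallitD (k n : ℕ) : ℕ :=
  sInf {m : ℕ | 0 < m ∧ Discriminates k m n}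

/-- The index of appearance `z_k(m)`: the smallest `n ≥ 1` with `m ∣ U_n(k)`. -/
noncomputable def shallitZ (k m : ℕ) : ℕ :=
  sInf {n : ℕ | 0 < n ∧ (m : ℤ) ∣ shallitU k n}

/-- The incongruence index `ι_k(m)`: the largest `j` such that
`U₀(k), …, U_{j-1}(k)` are pairwise distinct modulo `m`. -/
noncomputable def shallitIota (k m : ℕ) : ℕ :=
  sSup {j : ℕ | Discriminates k m j}

/-- `P(N)`: positive integers all of whose prime divisors divide `N`. -/
def setP (N : ℕ) : Set ℕ :=
  {m | 0 < m ∧ ∀ p : ℕ, p.Prime → p ∣ m → p ∣ N}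

/-- The set `A_k`. -/
def setA (k : ℕ) : Set ℕ :=
  {m | 0 < m ∧ Odd m ∧ (∀ p : ℕ, p.Prime → p ∣ m → p ∣ k) ∧
    (k % 9 = 6 → ¬ (9 ∣ m))}

/-- The set `B_k`. -/
def setB (k : ℕ) : Set ℕ :=
  {m | 0 < m ∧ Even m ∧ (∀ p : ℕ, p.Prime → p ∣ m → p ∣ k * (k + 1)) ∧
    ((k % 9 = 2 ∨ k % 9 = 6) → ¬ (9 ∣ m))}

/-- The set `S_{k,n} = {m ∈ A_k ∪ B_k : m ≥ n}`. -/
def setS (k n : ℕ) : Set ℕ :=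
  {m | m ∈ setA k ∪ setB k ∧ n ≤ m}

/-- The set `A_{5,k} = {a·5^b : a ∈ A_k, b ≥ 1}`. -/
def setA5 (k : ℕ) : Set ℕ :=
  {m | ∃ a b : ℕ, a ∈ setA k ∧ 1 ≤ b ∧ m = a * 5 ^ b}

/-- The set `B_{5,k} = {a·5^b : a ∈ B_k, b ≥ 1}`. -/
def setB5 (k : ℕ) : Set ℕ :=
  {m | ∃ a b : ℕ, a ∈ setB k ∧ 1 ≤ b ∧ m = a * 5 ^ b}

namespace Stmt11

def V {R : Type*} [CommRing R] (t : R) : ℕ → R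
  | 0 => 0
  | 1 => 1
  | n + 2 => (4 * t + 2) * V t (n + 1) - V t n

lemma map_V {R S : Type*} [CommRing R] [CommRing S] (f : R →+* S) (t : R) :
    ∀ n, f (V t n) = V (f t) n
  | 0 => by simp [V]
  | 1 => by simp [V]
  | n + 2 => by
    simp only [V, map_sub, map_mul, map_add, map_ofNat]
    rw [map_V f t (n + 1), map_V f t n]

lemma shallitU_eq (k : ℕ) : ∀ n, shallitU k n = V (k : ℤ) n
  | 0 => rfl
  | 1 => rfl
  | n + 2 => by
    rw [shallitU, V, shallitU_eq k (n + 1), shallitU_eq k n]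

noncomputable def Z {p : ℕ} (x : ZMod p) : ℕ := sInf {n | 0 < n ∧ V x n = 0}

lemma shallitZ_eq (p k : ℕ) : shallitZ k p = Z (k : ZMod p) := by
  unfold shallitZ Z
  congr 1
  ext n
  simp only [Set.mem_setOf_eq, and_congr_right_iff]
  intro _
  rw [shallitU_eq, ← ZMod.intCast_zmod_eq_zero_iff_dvd]
  rw [show ((V ((k:ℕ):ℤ) n : ℤ) : ZMod p) = (Int.castRingHom (ZMod p)) (V ((k:ℕ):ℤ) n) from rfl,
    map_V (Int.castRingHom (ZMod p))]
  norm_num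



variable {p : ℕ} [Fact p.Prime] {F : Type*} [Field F] [Finite F] [Algebra (ZMod p) F]

lemma four_ne_zero (hp5 : 5 ≤ p) : (4 : F) ≠ 0 := by
  haveI : CharP F p := charP_of_injective_algebraMap (algebraMap (ZMod p) F).injective p
  rw [show (4 : F) = ((4 : ℕ) : F) by norm_num, Ne, CharP.cast_eq_zero_iff F p]
  intro h
  have := Nat.le_of_dvd (by norm_num) h
  omega

lemma two_ne_zero' (hp5 : 5 ≤ p) : (2 : F) ≠ 0 := by
  haveI : CharP F p := charP_of_injective_algebraMap (algebraMap (ZMod p) F).injective p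
  rw [show (2 : F) = ((2 : ℕ) : F) by norm_num, Ne, CharP.cast_eq_zero_iff F p]
  intro h
  have := Nat.le_of_dvd (by norm_num) h
  omega

lemma Z_eq_orderOf (hp5 : 5 ≤ p) (x : ZMod p) (hx : x * (x + 1) ≠ 0)
    (d : F) (hd : d ^ 2 = algebraMap (ZMod p) F (x * (x + 1)))
    (a : Fˣ) (ha : (a : F) = algebraMap (ZMod p) F (2 * x + 1) + 2 * d) :
    Z x = orderOf (a ^ 2) ∧ ((a⁻¹ : Fˣ) : F) = algebraMap (ZMod p) F (2 * x + 1) - 2 * d := by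
  set e := algebraMap (ZMod p) F with he
  have hinj : Function.Injective e := (algebraMap (ZMod p) F).injective
  have key : (e (2 * x + 1) + 2 * d) * (e (2 * x + 1) - 2 * d) = 1 := by
    have h1 : (e (2 * x + 1) + 2 * d) * (e (2 * x + 1) - 2 * d)
        = e (2 * x + 1) * e (2 * x + 1) - 4 * d ^ 2 := by ring
    rw [h1, hd, (map_ofNat e 4).symm, ← map_mul, ← map_mul, ← map_sub, ← map_one e]
    congr 1
    ring
  have hmul : (a : F) * (e (2 * x + 1) - 2 * d) = 1 := by rw [ha]; exact key
  have hainv : ((a⁻¹ : Fˣ) : F) = e (2 * x + 1) - 2 * d := by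
    rw [Units.val_inv_eq_inv_val]
    exact inv_eq_of_mul_eq_one_right hmul
  have hAB1 : (a : F) * ((a⁻¹ : Fˣ) : F) = 1 := by rw [hainv]; exact hmul
  have hABsum : (a : F) + ((a⁻¹ : Fˣ) : F) = e (4 * x + 2) := by
    have h2 : e (4 * x + 2) = e (2 * x + 1) + e (2 * x + 1) := by
      rw [← map_add]; congr 1; ring
    rw [ha, hainv, h2]
    ring
  have hd0 : d ≠ 0 := by
    intro h
    apply hx
    apply hinj
    rw [map_zero, ← hd, h]
    ring
  have h4d : (4 : F) * d ≠ 0 := mul_ne_zero (four_ne_zero hp5) hd0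
  have key2 : ∀ n, 4 * d * e (V x n) = (a : F) ^ n - ((a⁻¹ : Fˣ) : F) ^ n := by
    intro n
    induction n using Nat.twoStepInduction with
    | zero => simp [V]
    | one => simp only [V, map_one, mul_one, pow_one]; rw [ha, hainv]; ring
    | more n ih2 ih1 =>
      show 4 * d * e (V x (n + 2)) = _
      rw [show V x (n + 2) = (4 * x + 2) * V x (n + 1) - V x n from rfl]
      rw [map_sub, map_mul]
      calc 4 * d * (e (4 * x + 2) * e (V x (n + 1)) - e (V x n))
          = ((a : F) + ((a⁻¹ : Fˣ) : F)) * (4 * d * e (V x (n + 1)))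
              - 4 * d * e (V x n) := by rw [← hABsum]; ring
        _ = ((a : F) + ((a⁻¹ : Fˣ) : F)) * ((a : F) ^ (n + 1) - ((a⁻¹ : Fˣ) : F) ^ (n + 1))
              - ((a : F) ^ n - ((a⁻¹ : Fˣ) : F) ^ n) := by rw [ih1, ih2]
        _ = (a : F) ^ (n + 2) - ((a⁻¹ : Fˣ) : F) ^ (n + 2) := by
              linear_combination ((a : F) ^ n - ((a⁻¹ : Fˣ) : F) ^ n) * hAB1
  have hAne : ∀ n : ℕ, (a : F) ^ n ≠ 0 := fun n => pow_ne_zero n (Units.ne_zero a)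
  have hzero : ∀ n, (V x n = 0 ↔ (a ^ 2) ^ n = 1) := by
    intro n
    constructor
    · intro h
      have hk := key2 n
      rw [h, map_zero, mul_zero] at hk
      have hAB' : (a : F) ^ n = ((a⁻¹ : Fˣ) : F) ^ n := by
        have := hk.symm
        rwa [sub_eq_zero] at this
      apply Units.ext
      push_cast
      calc ((a : F) ^ 2) ^ n = (a : F) ^ n * (a : F) ^ n := by ring
        _ = (a : F) ^ n * ((a⁻¹ : Fˣ) : F) ^ n := by rw [hAB']
        _ = ((a : F) * ((a⁻¹ : Fˣ) : F)) ^ n := by rw [mul_pow]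
        _ = 1 := by rw [hAB1, one_pow]
    · intro h
      have h1 : ((a : F) ^ 2) ^ n = 1 := by
        have := congrArg (Units.val) h
        push_cast at this
        exact this
      have hAB' : (a : F) ^ n * ((a : F) ^ n - ((a⁻¹ : Fˣ) : F) ^ n) = 0 := by
        have h2 : (a : F) ^ n * ((a : F) ^ n - ((a⁻¹ : Fˣ) : F) ^ n)
            = ((a : F) ^ 2) ^ n - ((a : F) * ((a⁻¹ : Fˣ) : F)) ^ n := by ring
        rw [h2, h1, hAB1, one_pow, sub_self]
      have hsub : (a : F) ^ n - ((a⁻¹ : Fˣ) : F) ^ n = 0 := by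
        rcases mul_eq_zero.1 hAB' with h' | h'
        · exact absurd h' (hAne n)
        · exact h'
      have hk := key2 n
      rw [hsub] at hk
      have : e (V x n) = 0 := by
        rcases mul_eq_zero.1 hk with h' | h'
        · exact absurd h' h4d
        · exact h'
      apply hinj
      rw [this, map_zero]
  have horder : {n | 0 < n ∧ V x n = 0} = {n | 0 < n ∧ orderOf (a ^ 2) ∣ n} := by
    ext n
    simp only [Set.mem_setOf_eq, hzero n, orderOf_dvd_iff_pow_eq_one]
  have hopos : 0 < orderOf (a ^ 2) := orderOf_pos _
  refine ⟨?_, hainv⟩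
  rw [Z, horder]
  refine le_antisymm (Nat.sInf_le ⟨hopos, dvd_rfl⟩) ?_
  have hmem := Nat.sInf_mem (⟨orderOf (a ^ 2), hopos, dvd_rfl⟩ :
    Set.Nonempty {n | 0 < n ∧ orderOf (a ^ 2) ∣ n})
  exact Nat.le_of_dvd hmem.1 hmem.2


lemma podd (hp5 : 5 ≤ p) : p % 2 = 1 := by
  rcases (Fact.out : p.Prime).eq_two_or_odd with h | h
  · omega
  · exact h

lemma exists_sqrt (hp5 : 5 ≤ p) (hcard : Nat.card F = p ^ 2) (c : ZMod p) :
    ∃ d : F, d ^ 2 = algebraMap (ZMod p) F c := by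
  set e := algebraMap (ZMod p) F with he
  have hpodd : p % 2 = 1 := podd hp5
  by_cases hc : c = 0
  · exact ⟨0, by rw [hc, map_zero]; ring⟩
  haveI : Fintype F := Fintype.ofFinite F
  haveI : CharP F p := charP_of_injective_algebraMap (algebraMap (ZMod p) F).injective p
  have hF2 : ringChar F ≠ 2 := by rw [ringChar.eq F p]; omega
  have ha : e c ≠ 0 := fun h => hc ((algebraMap (ZMod p) F).injective (by rw [h, map_zero]))
  have hcards : Fintype.card F = p ^ 2 := by rw [← Nat.card_eq_fintype_card, hcard]
  have hsq : IsSquare (e c) := by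
    rw [FiniteField.isSquare_iff hF2 ha, hcards]
    obtain ⟨t, ht⟩ : ∃ t, p = 2 * t + 1 := ⟨p / 2, by omega⟩
    have harith : p ^ 2 / 2 = (p - 1) / 2 * (p + 1) := by
      subst ht
      rw [show (2 * t + 1) ^ 2 = 4 * (t * t) + 4 * t + 1 by ring,
        show (2 * t + 1 - 1) / 2 = t by omega,
        show t * (2 * t + 1 + 1) = 2 * (t * t) + 2 * t by ring]
      generalize t * t = s
      omega
    rw [harith, pow_mul, ← map_pow]
    have hu : c ^ ((p - 1) / 2) = 1 ∨ c ^ ((p - 1) / 2) = -1 := by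
      apply mul_self_eq_one_iff.mp
      rw [← pow_add, show (p - 1) / 2 + (p - 1) / 2 = p - 1 by omega]
      exact ZMod.pow_card_sub_one_eq_one hc
    rcases hu with hu | hu
    · rw [hu, map_one, one_pow]
    · rw [hu, map_neg, map_one]
      exact Even.neg_one_pow ⟨(p + 1) / 2, by omega⟩
  obtain ⟨r, hr⟩ := hsq
  exact ⟨r, by rw [hr]; ring⟩

lemma mem_range (hcard : Nat.card F = p ^ 2) (y : F) (hy : y ^ p = y) :
    ∃ c : ZMod p, algebraMap (ZMod p) F c = y := by
  classical
  set e := algebraMap (ZMod p) F with he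
  have hp : p.Prime := Fact.out
  haveI : Fintype F := Fintype.ofFinite F
  have hinj : Function.Injective e := (algebraMap (ZMod p) F).injective
  set g : Polynomial F := Polynomial.X ^ p - Polynomial.X with hg
  have hg0 : g ≠ 0 := FiniteField.X_pow_card_sub_X_ne_zero F hp.one_lt
  have hdeg : g.natDegree = p := FiniteField.X_pow_card_sub_X_natDegree_eq F hp.one_lt
  have hroot : ∀ z : F, z ^ p = z → z ∈ g.roots.toFinset := by
    intro z hz
    rw [Multiset.mem_toFinset, Polynomial.mem_roots hg0]
    simp [hg, Polynomial.IsRoot, hz]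
  have hsub : Finset.univ.image e ⊆ g.roots.toFinset := by
    intro z hz
    obtain ⟨c, _, rfl⟩ := Finset.mem_image.mp hz
    apply hroot
    rw [← map_pow, ZMod.pow_card]
  have hcard1 : (Finset.univ.image e).card = p := by
    rw [Finset.card_image_of_injective _ hinj, Finset.card_univ, ZMod.card]
  have hcard2 : g.roots.toFinset.card ≤ p := by
    calc g.roots.toFinset.card ≤ Multiset.card g.roots := g.roots.toFinset_card_le
      _ ≤ g.natDegree := g.card_roots'
      _ = p := hdeg
  have heq : Finset.univ.image e = g.roots.toFinset :=
    Finset.eq_of_subset_of_card_le hsub (by omega)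
  have : y ∈ Finset.univ.image e := by rw [heq]; exact hroot y hy
  obtain ⟨c, _, hc⟩ := Finset.mem_image.mp this
  exact ⟨c, hc⟩


lemma exists_unit (x : ZMod p) (d : F)
    (hd : d ^ 2 = algebraMap (ZMod p) F (x * (x + 1))) :
    ∃ a : Fˣ, (a : F) = algebraMap (ZMod p) F (2 * x + 1) + 2 * d := by
  set e := algebraMap (ZMod p) F with he
  have key : (e (2 * x + 1) + 2 * d) * (e (2 * x + 1) - 2 * d) = 1 := by
    have h1 : (e (2 * x + 1) + 2 * d) * (e (2 * x + 1) - 2 * d)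
        = e (2 * x + 1) * e (2 * x + 1) - 4 * d ^ 2 := by ring
    rw [h1, hd, (map_ofNat e 4).symm, ← map_mul, ← map_mul, ← map_sub, ← map_one e]
    congr 1
    ring
  exact ⟨Units.mkOfMulEqOne _ _ key, rfl⟩

lemma V_zero_eq : ∀ n : ℕ, V (0 : ZMod p) n = (n : ZMod p)
  | 0 => by simp [V]
  | 1 => by simp [V]
  | n + 2 => by
    rw [show V (0 : ZMod p) (n+2) = (4*0+2) * V (0 : ZMod p) (n+1) - V (0 : ZMod p) n from rfl,
      V_zero_eq (n+1), V_zero_eq n]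
    push_cast
    ring

lemma V_negone_eq : ∀ n : ℕ, V (-1 : ZMod p) n = (-1) ^ (n + 1) * (n : ZMod p)
  | 0 => by simp [V]
  | 1 => by simp [V]
  | n + 2 => by
    rw [show V (-1 : ZMod p) (n+2)
        = (4*(-1)+2) * V (-1 : ZMod p) (n+1) - V (-1 : ZMod p) n from rfl,
      V_negone_eq (n+1), V_negone_eq n]
    push_cast
    ring


lemma card_A' (hp5 : 5 ≤ p) (hcard : Nat.card F = p ^ 2) :
    Nat.card {a : Fˣ // orderOf (a ^ 2) = (p + 1) / 2}
      = 2 * Nat.totient ((p + 1) / 2) := by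
  classical
  haveI : Fintype F := Fintype.ofFinite F
  rw [Nat.card_eq_fintype_card, Fintype.card_subtype]
  haveI : CharP F p := charP_of_injective_algebraMap (algebraMap (ZMod p) F).injective p
  have hpodd : p % 2 = 1 := by
    rcases (Fact.out : p.Prime).eq_two_or_odd with h | h
    · omega
    · exact h
  have hF2 : ringChar F ≠ 2 := by rw [ringChar.eq F p]; omega
  obtain ⟨t, ht⟩ : ∃ t, p = 2 * t + 1 := ⟨p / 2, by omega⟩
  set m := (p + 1) / 2 with hm
  have hmt : m = t + 1 := by omega
  have hcards : Fintype.card F = p ^ 2 := by rw [← Nat.card_eq_fintype_card, hcard]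
  have hcardU : Fintype.card Fˣ = p ^ 2 - 1 := by rw [Fintype.card_units, hcards]
  have hdvd : m ∣ Fintype.card Fˣ := by
    refine ⟨2 * (p - 1), ?_⟩
    rw [hcardU, ht, hmt]
    rw [show 2 * t + 1 - 1 = 2 * t by omega,
      show (2 * t + 1) ^ 2 = 4 * (t * t) + 4 * t + 1 by ring,
      show (t + 1) * (2 * (2 * t)) = 4 * (t * t) + 4 * t by ring]
    generalize t * t = s
    omega
  set Om := Finset.univ.filter fun g : Fˣ => orderOf g = m with hOm
  have hOmcard : Om.card = m.totient := IsCyclic.card_orderOf_eq_totient hdvd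
  set A' := Finset.univ.filter fun a : Fˣ => orderOf (a ^ 2) = m with hA'
  have hmaps : ∀ a ∈ A', a ^ 2 ∈ Om := by
    intro a ha
    simp only [A', Om, Finset.mem_filter, Finset.mem_univ, true_and] at ha ⊢
    exact ha
  rw [Finset.card_eq_sum_card_fiberwise hmaps]
  have hfiber : ∀ g ∈ Om, (A'.filter fun a => a ^ 2 = g).card = 2 := by
    intro g hg
    simp only [Om, Finset.mem_filter, Finset.mem_univ, true_and] at hg
    have hsq : IsSquare g := by
      rw [FiniteField.unit_isSquare_iff hF2, hcards]
      have harith : p ^ 2 / 2 = m * (p - 1) := by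
        rw [ht, hmt, show 2 * t + 1 - 1 = 2 * t by omega,
          show (2 * t + 1) ^ 2 = (2 * (t * t) + 2 * t) * 2 + 1 by ring,
          show (t + 1) * (2 * t) = 2 * (t * t) + 2 * t by ring]
        generalize t * t = s
        omega
      rw [harith, pow_mul, ← hg, pow_orderOf_eq_one, one_pow]
    obtain ⟨a₀, ha₀⟩ := hsq
    have ha₀sq : a₀ ^ 2 = g := by rw [ha₀, pow_two]
    have hne : a₀ ≠ -a₀ := by
      intro h
      have hv : (a₀ : F) = -(a₀ : F) := by
        have := congrArg Units.val h
        rwa [Units.val_neg] at this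
      have : (2 : F) * (a₀ : F) = 0 := by linear_combination hv
      rcases mul_eq_zero.mp this with h' | h'
      · have h2 : ((2 : ℕ) : F) ≠ 0 := by
          rw [Ne, CharP.cast_eq_zero_iff F p]
          intro hd
          have := Nat.le_of_dvd (by norm_num) hd
          omega
        exact h2 (by exact_mod_cast h')
      · exact a₀.ne_zero h'
    have hfeq : A'.filter (fun a => a ^ 2 = g) = {a₀, -a₀} := by
      ext a
      simp only [A', Finset.mem_filter, Finset.mem_univ, true_and, Finset.mem_insert,
        Finset.mem_singleton]
      constructor
      · rintro ⟨-, h2⟩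
        have hval : ((a : F) - (a₀ : F)) * ((a : F) + (a₀ : F)) = 0 := by
          have : (a : F) ^ 2 = (a₀ : F) ^ 2 := by
            have := congrArg Units.val (h2.trans ha₀sq.symm)
            push_cast at this
            exact this
          linear_combination this
        rcases mul_eq_zero.mp hval with h' | h'
        · left; apply Units.ext; linear_combination h'
        · right; apply Units.ext
          rw [Units.val_neg]
          linear_combination h'
      · rintro (rfl | rfl)
        · exact ⟨by rw [ha₀sq]; exact hg, ha₀sq⟩
        · refine ⟨?_, by rw [neg_sq, ha₀sq]⟩
          rw [neg_sq, ha₀sq]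
          exact hg
    rw [hfeq, Finset.card_insert_of_notMem (by simpa using hne), Finset.card_singleton]
  rw [Finset.sum_congr rfl hfiber, Finset.sum_const, smul_eq_mul, hOmcard, mul_comm]


lemma Z_ne_degenerate (hp5 : 5 ≤ p) (x : ZMod p) (hx : x * (x + 1) = 0) :
    Z x ≠ (p + 1) / 2 := by
  intro h
  set m := (p + 1) / 2 with hm
  have hm3 : 3 ≤ m ∧ m < p := by constructor <;> omega
  have hmne : ((m : ℕ) : ZMod p) ≠ 0 := by
    rw [Ne, ZMod.natCast_eq_zero_iff]
    intro hdvd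
    have := Nat.le_of_dvd (by omega) hdvd
    omega
  have hne : V x m ≠ 0 := by
    rcases mul_eq_zero.mp hx with h0 | h1
    · rw [h0, V_zero_eq]; exact hmne
    · have hx1 : x = -1 := by linear_combination h1
      rw [hx1, V_negone_eq]
      intro hz
      rcases mul_eq_zero.mp hz with h' | h'
      · exact pow_ne_zero _ (neg_ne_zero.mpr one_ne_zero) h'
      · exact hmne h'
  by_cases hemp : {n | 0 < n ∧ V x n = 0}.Nonempty
  · have hmem : Z x ∈ {n | 0 < n ∧ V x n = 0} := Nat.sInf_mem hemp
    rw [h] at hmem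
    exact hne hmem.2
  · rw [Set.not_nonempty_iff_eq_empty] at hemp
    have : Z x = 0 := by rw [Z, hemp, Nat.sInf_empty]
    omega

lemma card_A'_eq_two_mul (hp5 : 5 ≤ p) (hcard : Nat.card F = p ^ 2) :
    Nat.card {a : Fˣ // orderOf (a ^ 2) = (p + 1) / 2}
      = 2 * Nat.card {x : ZMod p // Z x = (p + 1) / 2} := by
  classical
  haveI : Fintype F := Fintype.ofFinite F
  haveI : CharP F p := charP_of_injective_algebraMap (algebraMap (ZMod p) F).injective p
  rw [Nat.card_eq_fintype_card, Fintype.card_subtype, Nat.card_eq_fintype_card,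
    Fintype.card_subtype]
  have hpodd : p % 2 = 1 := podd hp5
  set m := (p + 1) / 2 with hm
  have hm3 : 3 ≤ m := by omega
  have h2m : 2 * m = p + 1 := by omega
  set e := algebraMap (ZMod p) F with he
  have hinj : Function.Injective e := (algebraMap (ZMod p) F).injective
  have h4 : (4 : ZMod p) ≠ 0 := by
    rw [show (4 : ZMod p) = ((4 : ℕ) : ZMod p) by norm_num, Ne,
      ZMod.natCast_eq_zero_iff]
    intro hdvd
    have := Nat.le_of_dvd (by norm_num) hdvd
    omega
  set r : F → ZMod p := Function.invFun e with hr
  set Φ : Fˣ → ZMod p :=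
    fun a => (r ((a : F) + ((a⁻¹ : Fˣ) : F)) - 2) * (4 : ZMod p)⁻¹ with hΦdef
  have hABone : ∀ a : Fˣ, (a : F) * ((a⁻¹ : Fˣ) : F) = 1 := by
    intro a
    rw [Units.val_inv_eq_inv_val]
    exact mul_inv_cancel₀ a.ne_zero
  have main : ∀ a : Fˣ, orderOf (a ^ 2) = m →
      e (4 * Φ a + 2) = (a : F) + ((a⁻¹ : Fˣ) : F) ∧ Z (Φ a) = m := by
    intro a hord
    have hap1 : a ^ (p + 1) = 1 := by
      rw [show p + 1 = 2 * m by omega, pow_mul]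
      rw [← hord]
      exact pow_orderOf_eq_one (a ^ 2)
    have hapu : a ^ p = a⁻¹ := by
      apply eq_inv_of_mul_eq_one_left
      rw [← pow_succ]
      exact hap1
    have hapinv : (a : F) ^ p = ((a⁻¹ : Fˣ) : F) := by
      rw [← Units.val_pow_eq_pow_val, hapu]
    have hs : ((a : F) + ((a⁻¹ : Fˣ) : F)) ^ p = (a : F) + ((a⁻¹ : Fˣ) : F) := by
      rw [add_pow_char, hapinv]
      have : ((a⁻¹ : Fˣ) : F) ^ p = (a : F) := by
        rw [← Units.val_pow_eq_pow_val, inv_pow, hapu, inv_inv]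
      rw [this, add_comm]
    obtain ⟨c, hc⟩ := mem_range hcard _ hs
    have hre : e (r ((a : F) + ((a⁻¹ : Fˣ) : F))) = (a : F) + ((a⁻¹ : Fˣ) : F) :=
      Function.invFun_eq ⟨c, hc⟩
    have hΦa : e (4 * Φ a + 2) = (a : F) + ((a⁻¹ : Fˣ) : F) := by
      have h1 : 4 * Φ a + 2 = r ((a : F) + ((a⁻¹ : Fˣ) : F)) := by
        rw [hΦdef]
        field_simp
        ring
      rw [h1, hre]
    refine ⟨hΦa, ?_⟩
    set k := Φ a with hk
    set d : F := ((a : F) - ((a⁻¹ : Fˣ) : F)) / 4 with hd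
    have h4F : (4 : F) ≠ 0 := four_ne_zero hp5
    have h16F : (16 : F) ≠ 0 := by
      intro h
      apply h4F
      have : (16 : F) = 4 * 4 := by norm_num
      rw [this] at h
      rcases mul_eq_zero.mp h with h' | h' <;> exact h'
    have h4d : (4 : F) * d = (a : F) - ((a⁻¹ : Fˣ) : F) := by
      rw [hd]
      field_simp
    have hd2 : d ^ 2 = e (k * (k + 1)) := by
      have h161 : (16 : F) * d ^ 2 = (16 : F) * e (k * (k + 1)) := by
        have hlhs : (16 : F) * d ^ 2
            = ((a : F) + ((a⁻¹ : Fˣ) : F)) ^ 2 - 4 * ((a : F) * ((a⁻¹ : Fˣ) : F)) := by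
          linear_combination (4 * d + (a : F) - ((a⁻¹ : Fˣ) : F)) * h4d
        have hrhs : (16 : F) * e (k * (k + 1))
            = ((a : F) + ((a⁻¹ : Fˣ) : F)) ^ 2 - 4 := by
          have h16e : (16 : F) * e (k * (k + 1)) = e (4 * k + 2) * e (4 * k + 2) - 4 := by
            rw [← map_mul, (map_ofNat e 16).symm, (map_ofNat e 4).symm, ← map_mul, ← map_sub]
            congr 1
            ring
          rw [h16e, ← hΦa]
          ring
        rw [hlhs, hrhs, hABone a]
        ring
      exact mul_left_cancel₀ h16F h161
    have hkk : k * (k + 1) ≠ 0 := by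
      intro h0
      have hdz : d = 0 := by
        have : d ^ 2 = 0 := by rw [hd2, h0, map_zero]
        exact pow_eq_zero_iff (by norm_num) |>.mp this
      have hAeq : (a : F) = ((a⁻¹ : Fˣ) : F) := by
        have h0' := h4d
        rw [hdz, mul_zero] at h0'
        linear_combination -h0'
      have ha2 : a ^ 2 = 1 := by
        apply Units.ext
        push_cast
        calc (a : F) ^ 2 = (a : F) * (a : F) := by ring
          _ = (a : F) * ((a⁻¹ : Fˣ) : F) := by rw [← hAeq]
          _ = 1 := hABone a
      rw [ha2, orderOf_one] at hord
      omega
    have haval : (a : F) = e (2 * k + 1) + 2 * d := by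
      have h2F : (2 : F) ≠ 0 := two_ne_zero' hp5
      apply mul_left_cancel₀ h2F
      have he2 : (2 : F) * e (2 * k + 1) = e (4 * k + 2) := by
        rw [(map_ofNat e 2).symm, ← map_mul]
        congr 1
        ring
      calc (2 : F) * (a : F)
          = ((a : F) + ((a⁻¹ : Fˣ) : F)) + ((a : F) - ((a⁻¹ : Fˣ) : F)) := by ring
        _ = e (4 * k + 2) + 4 * d := by rw [← hΦa, h4d]
        _ = (2 : F) * (e (2 * k + 1) + 2 * d) := by rw [← he2]; ring
    exact (Z_eq_orderOf hp5 k hkk d hd2 a haval).1.trans hord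
  have hmaps : ∀ a ∈ Finset.univ.filter (fun a : Fˣ => orderOf (a ^ 2) = m),
      Φ a ∈ Finset.univ.filter (fun x : ZMod p => Z x = m) := by
    intro a ha
    simp only [Finset.mem_filter, Finset.mem_univ, true_and] at ha ⊢
    exact (main a ha).2
  rw [Finset.card_eq_sum_card_fiberwise hmaps]
  have hfib : ∀ k ∈ Finset.univ.filter (fun x : ZMod p => Z x = m),
      ((Finset.univ.filter (fun a : Fˣ => orderOf (a ^ 2) = m)).filter
        (fun a => Φ a = k)).card = 2 := by
    intro k hkmem
    simp only [Finset.mem_filter, Finset.mem_univ, true_and] at hkmem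
    have hkk : k * (k + 1) ≠ 0 := by
      intro h0
      exact Z_ne_degenerate hp5 k h0 hkmem
    obtain ⟨d, hd⟩ := exists_sqrt hp5 hcard (k * (k + 1))
    obtain ⟨a₀, ha₀⟩ := exists_unit k d hd
    obtain ⟨hZeq, hainv₀⟩ := Z_eq_orderOf hp5 k hkk d hd a₀ ha₀
    rw [← he] at ha₀ hainv₀
    have hord₀ : orderOf (a₀ ^ 2) = m := by rw [← hZeq, hkmem]
    have hsum₀ : (a₀ : F) + ((a₀⁻¹ : Fˣ) : F) = e (4 * k + 2) := by
      have h2' : e (4 * k + 2) = e (2 * k + 1) + e (2 * k + 1) := by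
        rw [← map_add]; congr 1; ring
      rw [ha₀, hainv₀, h2']
      ring
    have hre₀ : r ((a₀ : F) + ((a₀⁻¹ : Fˣ) : F)) = 4 * k + 2 := by
      apply hinj
      rw [Function.invFun_eq ⟨4 * k + 2, hsum₀.symm⟩, hsum₀]
    have hΦ₀ : Φ a₀ = k := by
      rw [hΦdef]
      simp only
      rw [hre₀]
      field_simp
      ring
    have hΦ₀' : Φ a₀⁻¹ = k := by
      rw [hΦdef]
      simp only [inv_inv]
      rw [add_comm ((a₀⁻¹ : Fˣ) : F), hre₀]
      field_simp
      ring
    have hord₀' : orderOf ((a₀⁻¹) ^ 2) = m := by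
      rw [inv_pow, orderOf_inv, hord₀]
    have hne₀ : a₀ ≠ a₀⁻¹ := by
      intro h
      have : a₀ ^ 2 = 1 := by
        rw [pow_two]
        nth_rewrite 2 [h]
        exact mul_inv_cancel a₀
      rw [this, orderOf_one] at hord₀
      omega
    have hfeq : ((Finset.univ.filter (fun a : Fˣ => orderOf (a ^ 2) = m)).filter
        (fun a => Φ a = k)) = {a₀, a₀⁻¹} := by
      ext a
      simp only [Finset.mem_filter, Finset.mem_univ, true_and, Finset.mem_insert,
        Finset.mem_singleton]
      constructor
      · rintro ⟨hord, hΦa⟩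
        have hmain := (main a hord).1
        rw [hΦa] at hmain
        have h3 : (a₀ : F) + ((a₀⁻¹ : Fˣ) : F) = (a : F) + ((a⁻¹ : Fˣ) : F) := by
          rw [hsum₀, ← hmain]
        have hq : ((a : F) - (a₀ : F)) * ((a : F) - ((a₀⁻¹ : Fˣ) : F)) = 0 := by
          linear_combination hABone a₀ + (-(a : F)) * h3 - hABone a
        rcases mul_eq_zero.mp hq with h' | h'
        · left; exact Units.ext (by linear_combination h')
        · right; exact Units.ext (by linear_combination h')
      · rintro (rfl | rfl)
        · exact ⟨hord₀, hΦ₀⟩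
        · exact ⟨hord₀', hΦ₀'⟩
    rw [hfeq, Finset.card_insert_of_notMem (by simpa using hne₀), Finset.card_singleton]
  rw [Finset.sum_congr rfl hfib, Finset.sum_const, smul_eq_mul, mul_comm]

lemma orderOf_dvd_cases (hp5 : 5 ≤ p) (hcard : Nat.card F = p ^ 2) (x : ZMod p) (hx : x * (x + 1) ≠ 0)
    (d : F) (hd : d ^ 2 = algebraMap (ZMod p) F (x * (x + 1)))
    (a : Fˣ) (ha : (a : F) = algebraMap (ZMod p) F (2 * x + 1) + 2 * d)
    (hainv : ((a⁻¹ : Fˣ) : F) = algebraMap (ZMod p) F (2 * x + 1) - 2 * d) :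
    orderOf (a ^ 2) ∣ (p - 1) / 2 ∨ orderOf (a ^ 2) ∣ (p + 1) / 2 := by
  set e := algebraMap (ZMod p) F with he
  have hpodd : p % 2 = 1 := by
    rcases (Fact.out : p.Prime).eq_two_or_odd with h | h
    · omega
    · exact h
  have hinj : Function.Injective e := (algebraMap (ZMod p) F).injective
  haveI : CharP F p := charP_of_injective_algebraMap hinj p
  by_cases hsq : IsSquare (x * (x + 1))
  · left
    obtain ⟨d₀, hd₀⟩ := hsq
    have hdd : (d - e d₀) * (d + e d₀) = 0 := by
      have : d ^ 2 - e d₀ * e d₀ = 0 := by rw [hd, ← map_mul, ← hd₀, sub_self]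
      calc (d - e d₀) * (d + e d₀) = d ^ 2 - e d₀ * e d₀ := by ring
        _ = 0 := this
    have hya : ∃ y : ZMod p, e y = (a : F) := by
      rcases mul_eq_zero.mp hdd with h | h
      · exact ⟨2 * x + 1 + 2 * d₀, by
          rw [ha, show d = e d₀ from sub_eq_zero.mp h, map_add, map_mul, map_ofNat]⟩
      · exact ⟨2 * x + 1 - 2 * d₀, by
          rw [ha, show d = -e d₀ by linear_combination h, map_sub, map_mul, map_ofNat]
          ring⟩
    obtain ⟨y, hy⟩ := hya
    have hy0 : y ≠ 0 := by
      intro h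
      rw [h, map_zero] at hy
      exact a.ne_zero hy.symm
    apply orderOf_dvd_of_pow_eq_one
    apply Units.ext
    push_cast
    rw [← pow_mul, show 2 * ((p - 1) / 2) = p - 1 by omega, ← hy, ← map_pow,
      ZMod.pow_card_sub_one_eq_one hy0, map_one]
  · right
    have hc0 : x * (x + 1) ≠ 0 := hx
    have heuler : (x * (x + 1)) ^ (p / 2) = -1 := by
      rcases ZMod.pow_div_two_eq_neg_one_or_one p hc0 with h | h
      · exact absurd ((ZMod.euler_criterion p hc0).mpr h) hsq
      · exact h
    have hdp1 : d ^ (p - 1) = -1 := by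
      have h1 : d ^ (p - 1) = (d ^ 2) ^ ((p - 1) / 2) := by
        rw [← pow_mul]
        congr 1
        omega
      rw [h1, hd, ← map_pow, show (p - 1) / 2 = p / 2 by omega, heuler, map_neg, map_one]
    have hap : (a : F) ^ p = ((a⁻¹ : Fˣ) : F) := by
      rw [ha, add_pow_char, ← map_pow, ZMod.pow_card, mul_pow,
        show (2 : F) ^ p = 2 by rw [← map_ofNat e 2, ← map_pow, ZMod.pow_card],
        show d ^ p = -d by rw [show p = (p - 1) + 1 by omega, pow_succ, hdp1]; ring,
        hainv]
      ring
    have hapu : a ^ p = a⁻¹ := by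
      apply Units.ext
      push_cast
      rw [hap, Units.val_inv_eq_inv_val]
    apply orderOf_dvd_of_pow_eq_one
    rw [← pow_mul, show 2 * ((p + 1) / 2) = p + 1 by omega, pow_succ, hapu,
      inv_mul_cancel]

lemma Z_le (hp5 : 5 ≤ p) (hcard : Nat.card F = p ^ 2) (x : ZMod p)
    (hx : x * (x + 1) ≠ 0) : Z x ≤ (p + 1) / 2 := by
  obtain ⟨d, hd⟩ := exists_sqrt hp5 hcard (x * (x + 1))
  obtain ⟨a, ha⟩ := exists_unit x d hd
  obtain ⟨hZ, hainv⟩ := Z_eq_orderOf hp5 x hx d hd a ha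
  have hpos : 0 < orderOf (a ^ 2) := orderOf_pos _
  rcases orderOf_dvd_cases hp5 hcard x hx d hd a ha hainv with h | h
  · have := Nat.le_of_dvd (by omega) h
    omega
  · have := Nat.le_of_dvd (by omega) h
    rw [hZ]
    omega

lemma count1 {p : ℕ} [Fact p.Prime] (hp5 : 5 ≤ p) :
    Nat.card {x : ZMod p // Z x = (p + 1) / 2} = Nat.totient ((p + 1) / 2) := by
  have hcard : Nat.card (GaloisField p 2) = p ^ 2 := GaloisField.card p 2 (by norm_num)
  have h1 := card_A' (F := GaloisField p 2) hp5 hcard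
  have h2 := card_A'_eq_two_mul (F := GaloisField p 2) hp5 hcard
  omega

lemma count2 {p : ℕ} [Fact p.Prime] (hp5 : 5 ≤ p) :
    Nat.card {x : ZMod p // x * (x + 1) ≠ 0 ∧ Z x < (p + 1) / 2}
      = p - 2 - Nat.totient ((p + 1) / 2) := by
  classical
  have hcard : Nat.card (GaloisField p 2) = p ^ 2 := GaloisField.card p 2 (by norm_num)
  set m := (p + 1) / 2 with hm
  rw [Nat.card_eq_fintype_card, Fintype.card_subtype]
  set S := Finset.univ.filter (fun x : ZMod p => x * (x + 1) ≠ 0 ∧ Z x < m) with hS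
  set T := Finset.univ.filter (fun x : ZMod p => x * (x + 1) ≠ 0) with hT
  set K := Finset.univ.filter (fun x : ZMod p => Z x = m) with hK
  have hsub : K ⊆ T := by
    intro x hx
    simp only [hK, hT, Finset.mem_filter, Finset.mem_univ, true_and] at hx ⊢
    intro h0
    exact Z_ne_degenerate hp5 x h0 hx
  have hSeq : S = T \ K := by
    ext x
    simp only [hS, hT, hK, Finset.mem_filter, Finset.mem_univ, true_and, Finset.mem_sdiff]
    constructor
    · rintro ⟨h1, h2⟩
      exact ⟨h1, by omega⟩
    · rintro ⟨h1, h2⟩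
      refine ⟨h1, ?_⟩
      have := Z_le (F := GaloisField p 2) hp5 hcard x h1
      omega
  have hTcard : T.card = p - 2 := by
    have hT2 : T = Finset.univ \ Finset.univ.filter (fun x : ZMod p => x * (x + 1) = 0) := by
      rw [hT, ← Finset.filter_not]
    have hzf : Finset.univ.filter (fun x : ZMod p => x * (x + 1) = 0)
        = {(0 : ZMod p), (-1 : ZMod p)} := by
      ext x
      simp only [Finset.mem_filter, Finset.mem_univ, true_and, Finset.mem_insert,
        Finset.mem_singleton, mul_eq_zero]
      constructor
      · rintro (h | h)
        · exact Or.inl h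
        · exact Or.inr (by linear_combination h)
      · rintro (rfl | rfl)
        · exact Or.inl rfl
        · exact Or.inr (by ring)
    have hne01 : (0 : ZMod p) ≠ -1 := by
      intro h
      have h1 : ((1 : ℕ) : ZMod p) = 0 := by
        push_cast
        linear_combination h
      rw [ZMod.natCast_eq_zero_iff] at h1
      have := Nat.le_of_dvd (by norm_num) h1
      omega
    rw [hT2, Finset.card_sdiff_of_subset (Finset.subset_univ _), hzf, Finset.card_univ, ZMod.card,
      Finset.card_insert_of_notMem (by simpa using hne01), Finset.card_singleton]
  have hKcard : K.card = Nat.totient m := by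
    have := count1 hp5 (p := p)
    rw [Nat.card_eq_fintype_card, Fintype.card_subtype] at this
    rw [hK]
    convert this using 2
  rw [hSeq, Finset.card_sdiff_of_subset hsub, hTcard, hKcard]


lemma ncard_transfer {p : ℕ} [Fact p.Prime] (hp5 : 5 ≤ p) (P : ZMod p → Prop) :
    {k : ℕ | 1 ≤ k ∧ k ≤ p ∧ P (k : ZMod p)}.ncard = Nat.card {x : ZMod p // P x} := by
  classical
  have hset : {k : ℕ | 1 ≤ k ∧ k ≤ p ∧ P (k : ZMod p)}
      = ((Finset.filter (fun k : ℕ => P (k : ZMod p)) (Finset.Icc 1 p) : Finset ℕ) : Set ℕ) := by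
    ext k
    simp [Finset.mem_Icc, and_assoc]
  rw [hset, Set.ncard_coe_finset, Nat.card_eq_fintype_card, Fintype.card_subtype]
  refine Finset.card_bij (fun (k : ℕ) _ => (k : ZMod p)) ?_ ?_ ?_
  · intro k hk
    simp only [Finset.mem_filter, Finset.mem_Icc] at hk
    simp only [Finset.mem_filter, Finset.mem_univ, true_and]
    exact hk.2
  · intro k1 h1 k2 h2 heq
    simp only [Finset.mem_filter, Finset.mem_Icc] at h1 h2
    have hmod : k1 % p = k2 % p := (ZMod.natCast_eq_natCast_iff k1 k2 p).mp heq
    have e1 : k1 % p = k1 ∨ k1 % p = 0 ∧ k1 = p := by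
      rcases Nat.lt_or_ge k1 p with h | h
      · exact Or.inl (Nat.mod_eq_of_lt h)
      · have hk1p : k1 = p := le_antisymm h1.1.2 h
        exact Or.inr ⟨by rw [hk1p, Nat.mod_self], hk1p⟩
    have e2 : k2 % p = k2 ∨ k2 % p = 0 ∧ k2 = p := by
      rcases Nat.lt_or_ge k2 p with h | h
      · exact Or.inl (Nat.mod_eq_of_lt h)
      · have hk2p : k2 = p := le_antisymm h2.1.2 h
        exact Or.inr ⟨by rw [hk2p, Nat.mod_self], hk2p⟩
    rcases e1 with h1' | ⟨h1', hk1p⟩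
    · rcases e2 with h2' | ⟨h2', hk2p⟩
      · rw [h1', h2'] at hmod
        exact hmod
      · rw [h1', h2'] at hmod
        have := h1.1.1
        omega
    · rcases e2 with h2' | ⟨h2', hk2p⟩
      · rw [h1', h2'] at hmod
        have := h2.1.1
        omega
      · rw [hk1p, hk2p]
  · intro x hx
    simp only [Finset.mem_filter, Finset.mem_univ, true_and] at hx
    by_cases hx0 : x = 0
    · refine ⟨p, ?_, ?_⟩
      · simp only [Finset.mem_filter, Finset.mem_Icc]
        refine ⟨⟨by omega, le_refl p⟩, ?_⟩
        rw [ZMod.natCast_self, ← hx0]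
        exact hx
      · show ((p : ℕ) : ZMod p) = x
        rw [ZMod.natCast_self, hx0]
    · refine ⟨x.val, ?_, ?_⟩
      · simp only [Finset.mem_filter, Finset.mem_Icc]
        have hval : (x.val : ZMod p) = x := ZMod.natCast_rightInverse x
        refine ⟨⟨?_, le_of_lt (ZMod.val_lt x)⟩, by rw [hval]; exact hx⟩
        by_contra h
        have : x.val = 0 := by omega
        exact hx0 ((ZMod.val_eq_zero x).mp this)
      · exact ZMod.natCast_rightInverse x
        

end Stmt11

theorem stmt11 (p : ℕ) (hp : p.Prime) (hp5 : 5 ≤ p) (f : ℕ)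
    (hf : f = Nat.totient ((p + 1) / 2)) :
    {k : ℕ | 1 ≤ k ∧ k ≤ p ∧ shallitZ k p = (p + 1) / 2}.ncard = f ∧
    {k : ℕ | 1 ≤ k ∧ k ≤ p ∧ ¬ p ∣ k * (k + 1) ∧
      shallitZ k p < (p + 1) / 2}.ncard = p - f - 2 := by
  haveI : Fact p.Prime := ⟨hp⟩
  constructor
  · have h1 : {k : ℕ | 1 ≤ k ∧ k ≤ p ∧ shallitZ k p = (p + 1) / 2}
        = {k : ℕ | 1 ≤ k ∧ k ≤ p ∧ Stmt11.Z ((k : ZMod p)) = (p + 1) / 2} := by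
      ext k
      rw [Set.mem_setOf_eq, Set.mem_setOf_eq, Stmt11.shallitZ_eq p k]
    rw [h1, Stmt11.ncard_transfer hp5 (fun x => Stmt11.Z x = (p + 1) / 2),
      Stmt11.count1 hp5, hf]
  · have hdvd : ∀ k : ℕ, (p ∣ k * (k + 1)
        ↔ (k : ZMod p) * ((k : ZMod p) + 1) = 0) := by
      intro k
      rw [← ZMod.natCast_eq_zero_iff, Nat.cast_mul, Nat.cast_add, Nat.cast_one]
    have h2 : {k : ℕ | 1 ≤ k ∧ k ≤ p ∧ ¬ p ∣ k * (k + 1) ∧ shallitZ k p < (p + 1) / 2}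
        = {k : ℕ | 1 ≤ k ∧ k ≤ p ∧ ((k : ZMod p) * ((k : ZMod p) + 1) ≠ 0
            ∧ Stmt11.Z ((k : ZMod p)) < (p + 1) / 2)} := by
      ext k
      simp only [Set.mem_setOf_eq]
      rw [Stmt11.shallitZ_eq p k, hdvd k]
    rw [h2, Stmt11.ncard_transfer hp5
      (fun x => x * (x + 1) ≠ 0 ∧ Stmt11.Z x < (p + 1) / 2), Stmt11.count2 hp5, hf]
    omega
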